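/- Let Δ be a finite simplicial complex and σ ∈ Δ nonempty. If σ is strictly contained in the intersection f_σ of all facets of Δ containing σ (i.e., σ ≠ f_σ), then Lk_σ(Δ) is a cone: there exists a vertex v ∈ f_σ ∖ σ such that every face ω ∈ Lk_σ(Δ) satisfies ω ∪ {v} ∈ Lk_σ(Δ). -/

import Mathlib

/-- A simplicial complex on `[n]`: a collection of subsets of `[n]` closed under inclusion. -/
def IsSimplicialComplex {n : ℕ} (Δ : Set (Finset (Fin n))) : Prop :=
  ∀ σ ∈ Δ, ∀ τ ⊆ σ, τ ∈ Δ

/-- The link of `σ` in `Δ`. -/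
def link {n : ℕ} (Δ : Set (Finset (Fin n))) (σ : Finset (Fin n)) : Set (Finset (Fin n)) :=
  {ω | ω ∈ Δ ∧ Disjoint σ ω ∧ σ ∪ ω ∈ Δ}

/-- `ρ` is a facet of `Δ`: a face maximal under inclusion. -/
def IsFacet {n : ℕ} (Δ : Set (Finset (Fin n))) (ρ : Finset (Fin n)) : Prop :=
  ρ ∈ Δ ∧ ∀ τ ∈ Δ, ρ ⊆ τ → τ = ρ

/-- `f_σ`: the intersection of all facets of `Δ` containing `σ`, as a set of vertices. -/
def facetInt {n : ℕ} (Δ : Set (Finset (Fin n))) (σ : Finset (Fin n)) : Set (Fin n) :=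
  {i | ∀ ρ, IsFacet Δ ρ → σ ⊆ ρ → i ∈ ρ}

/-- Every face is contained in a facet. -/
lemma exists_facet {n : ℕ} (Δ : Set (Finset (Fin n))) (τ : Finset (Fin n)) (hτ : τ ∈ Δ) :
    ∃ ρ, IsFacet Δ ρ ∧ τ ⊆ ρ := by
  obtain ⟨ρ, hρ, hmax⟩ := Set.Finite.exists_maximalFor Finset.card
    {ρ | ρ ∈ Δ ∧ τ ⊆ ρ} (Set.toFinite _) ⟨τ, hτ, subset_rfl⟩
  obtain ⟨hρΔ, hτρ⟩ := hρ
  refine ⟨ρ, ⟨hρΔ, fun τ' hτ' hsub => ?_⟩, hτρ⟩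
  have := hmax (show τ' ∈ {ρ | ρ ∈ Δ ∧ τ ⊆ ρ} from ⟨hτ', hτρ.trans hsub⟩) (Finset.card_le_card hsub)
  exact (Finset.eq_of_subset_of_card_le hsub this.ge).symm

theorem stmt3 {n : ℕ} (Δ : Set (Finset (Fin n))) (hΔ : IsSimplicialComplex Δ)
    (σ : Finset (Fin n)) (hσ : σ ∈ Δ) (hne : σ.Nonempty)
    (hstrict : (↑σ : Set (Fin n)) ≠ facetInt Δ σ) :
    ∃ v : Fin n, v ∈ facetInt Δ σ ∧ v ∉ σ ∧
      ∀ ω ∈ link Δ σ, insert v ω ∈ link Δ σ := by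
  have hsub : (↑σ : Set (Fin n)) ⊆ facetInt Δ σ := fun i hi ρ _ hσρ => hσρ hi
  obtain ⟨v, hvf, hvσ⟩ : ∃ v, v ∈ facetInt Δ σ ∧ v ∉ σ := by
    by_contra h
    push_neg at h
    exact hstrict (hsub.antisymm fun i hi => by_contra fun hiσ => hiσ (h i hi))
  refine ⟨v, hvf, hvσ, fun ω hω => ?_⟩
  obtain ⟨hωΔ, hdisj, hunΔ⟩ := hω
  obtain ⟨ρ, hρ, hunρ⟩ := exists_facet Δ (σ ∪ ω) hunΔ
  have hσρ : σ ⊆ ρ := (Finset.subset_union_left).trans hunρ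
  have hvρ : v ∈ ρ := hvf ρ hρ hσρ
  have h1 : insert v ω ⊆ ρ := Finset.insert_subset hvρ ((Finset.subset_union_right).trans hunρ)
  have h2 : σ ∪ insert v ω ⊆ ρ := Finset.union_subset hσρ h1
  refine ⟨hΔ ρ hρ.1 _ h1, ?_, hΔ ρ hρ.1 _ h2⟩
  exact Finset.disjoint_insert_right.mpr ⟨hvσ, hdisj⟩
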